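/- arXiv:2106.09405 — 2 statements merged into one kernel-verified Lean document; each statement's English description precedes it below -/
import Mathlib

section
/- Let ε ∈ (0,1/4], ε₀ := (1−√(1−4ε))/2, p ∈ Δ(K), x a mixed action, and x' := c_{ε₀}(x,p). Then x' is ε-concise at p: for all i ∈ NR[x',ε,p] and all k ∈ K, x'(i|k) = (x'(NR[x',ε,p]|k)/x̄'^p(NR[x',ε,p]))·x̄'^p(i). -/
open Finset

noncomputable section
open Classical

/-- `p` is an element of the probability simplex Δ(K). -/
def pSimplex {K : Type*} [Fintype K] (p : K → ℝ) : Prop :=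
  (∀ k, 0 ≤ p k) ∧ ∑ k, p k = 1

/-- `x : K → Δ(I)` is a mixed action, written `x k i = x(i|k)`. -/
def MixedAction {K I : Type*} [Fintype K] [Fintype I] (x : K → I → ℝ) : Prop :=
  (∀ k i, 0 ≤ x k i) ∧ ∀ k, ∑ i, x k i = 1

/-- Marginal `x̄^p(i) = ∑_k p(k)·x(i|k)`. -/
def bar {K I : Type*} [Fintype K] (p : K → ℝ) (x : K → I → ℝ) (i : I) : ℝ :=
  ∑ k, p k * x k i

/-- Posterior `p^x(k|i)`. -/
def post {K I : Type*} [Fintype K] (p : K → ℝ) (x : K → I → ℝ) (i : I) (k : K) : ℝ :=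
  if bar p x i ≠ 0 then x k i * p k / bar p x i else p k

/-- The set `NR[x,ε,p]` of (x,ε)-non-revealing actions at p. -/
def NRset {K I : Type*} [Fintype K] [Fintype I] (x : K → I → ℝ) (ε : ℝ) (p : K → ℝ) :
    Finset I :=
  Finset.univ.filter fun i =>
    bar p x i ≠ 0 ∧ ∀ k, (1 - ε) * bar p x i ≤ x k i ∧ x k i ≤ (1 + ε) * bar p x i

/-- The set `R[x,ε,p]` of (x,ε)-revealing actions at p. -/
def Rset {K I : Type*} [Fintype K] [Fintype I] (x : K → I → ℝ) (ε : ℝ) (p : K → ℝ) :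
    Finset I :=
  (Finset.univ.filter fun i => bar p x i ≠ 0) \ NRset x ε p

/-- `x(A|k) = ∑_{i∈A} x(i|k)`. -/
def xOn {K I : Type*} (x : K → I → ℝ) (A : Finset I) (k : K) : ℝ := ∑ i ∈ A, x k i

/-- `x̄^p(A) = ∑_{i∈A} x̄^p(i)`. -/
def barOn {K I : Type*} [Fintype K] (p : K → ℝ) (x : K → I → ℝ) (A : Finset I) : ℝ :=
  ∑ i ∈ A, bar p x i

/-- The ε-silent mapping `c_ε(x,p)`. -/
def silent {K I : Type*} [Fintype K] [Fintype I] (ε : ℝ) (x : K → I → ℝ) (p : K → ℝ) :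
    K → I → ℝ :=
  fun k i =>
    if i ∈ NRset x ε p then
      ((1 - ε) * xOn x (NRset x ε p) k / barOn p x (NRset x ε p) + ε) * bar p x i
    else (1 - ε) * x k i + ε * bar p x i

lemma mem_NRset {K I : Type*} [Fintype K] [Fintype I] (x : K → I → ℝ) (ε : ℝ) (p : K → ℝ)
    (i : I) : i ∈ NRset x ε p ↔
      bar p x i ≠ 0 ∧ ∀ k, (1 - ε) * bar p x i ≤ x k i ∧ x k i ≤ (1 + ε) * bar p x i := by
  simp [NRset]

/-- x' = c_{ε₀}(x,p) is ε-concise at p. -/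
theorem silent_is_concise {K I : Type*} [Fintype K] [Fintype I] [Nonempty K] [Nonempty I]
    (ε : ℝ) (hε0 : 0 < ε) (hε1 : ε ≤ 1/4)
    (p : K → ℝ) (hp : pSimplex p)
    (x : K → I → ℝ) (hx : MixedAction x) :
    ∀ i ∈ NRset (silent ((1 - Real.sqrt (1 - 4*ε))/2) x p) ε p, ∀ k : K,
      silent ((1 - Real.sqrt (1 - 4*ε))/2) x p k i =
        xOn (silent ((1 - Real.sqrt (1 - 4*ε))/2) x p)
            (NRset (silent ((1 - Real.sqrt (1 - 4*ε))/2) x p) ε p) k /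
          barOn p (silent ((1 - Real.sqrt (1 - 4*ε))/2) x p)
            (NRset (silent ((1 - Real.sqrt (1 - 4*ε))/2) x p) ε p) *
          bar p (silent ((1 - Real.sqrt (1 - 4*ε))/2) x p) i := by
  set s := Real.sqrt (1 - 4*ε) with hs
  set ε₀ := (1 - s)/2 with hε₀def
  have h4ε : (0:ℝ) ≤ 1 - 4*ε := by linarith
  have hs2 : s^2 = 1 - 4*ε := Real.sq_sqrt h4ε
  have hs0 : 0 ≤ s := Real.sqrt_nonneg _
  have hs1 : s < 1 := by nlinarith [hs2, hs0, hε0]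
  have hε₀pos : 0 < ε₀ := by rw [hε₀def]; linarith
  have hε₀lt : ε₀ < 1 := by rw [hε₀def]; linarith
  have hkey : ε₀ * (1 - ε₀) = ε := by rw [hε₀def]; nlinarith [hs2]
  set x' := silent ε₀ x p with hx'
  set N := NRset x ε₀ p with hN
  set B := barOn p x N with hB
  have hbarnn : ∀ i, 0 ≤ bar p x i := fun i =>
    Finset.sum_nonneg fun k _ => mul_nonneg (hp.1 k) (hx.1 k i)
  have hbarposN : ∀ i ∈ N, 0 < bar p x i := by
    intro i hi
    rw [hN, mem_NRset] at hi
    exact lt_of_le_of_ne (hbarnn i) (Ne.symm hi.1)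
  have hx'N : ∀ i ∈ N, ∀ k, x' k i = ((1-ε₀) * xOn x N k / B + ε₀) * bar p x i := by
    intro i hi k
    simp only [hx', silent, ← hN, ← hB, if_pos hi]
  have hx'R : ∀ i ∉ N, ∀ k, x' k i = (1-ε₀) * x k i + ε₀ * bar p x i := by
    intro i hi k
    simp only [hx', silent, ← hN, if_neg hi]
  have hsumxOn : ∑ k, p k * xOn x N k = B := by
    simp only [hB, xOn, barOn, bar, Finset.mul_sum]
    exact Finset.sum_comm
  have hbar' : ∀ i, bar p x' i = bar p x i := by
    intro i
    by_cases hiN : i ∈ N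
    · have hBpos : 0 < B := by
        rw [hB, barOn]
        exact Finset.sum_pos (fun j hj => hbarposN j hj) ⟨i, hiN⟩
      calc bar p x' i = ∑ k, ((1-ε₀)/B * (p k * xOn x N k) + ε₀ * p k) * bar p x i := by
            refine Finset.sum_congr rfl fun k _ => ?_
            rw [hx'N i hiN k]; field_simp
        _ = ((1-ε₀)/B * B + ε₀ * 1) * bar p x i := by
            rw [← Finset.sum_mul, Finset.sum_add_distrib, ← Finset.mul_sum, ← Finset.mul_sum,
              hsumxOn, hp.2]
        _ = bar p x i := by field_simp; ring
    · calc bar p x' i = ∑ k, ((1-ε₀) * (p k * x k i) + ε₀ * bar p x i * p k) := by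
            refine Finset.sum_congr rfl fun k _ => ?_
            rw [hx'R i hiN k]; ring
        _ = (1-ε₀) * bar p x i + ε₀ * bar p x i * 1 := by
            rw [Finset.sum_add_distrib, ← Finset.mul_sum, ← Finset.mul_sum, hp.2, bar]
        _ = bar p x i := by ring
  -- N ⊆ NRset x' ε p
  have hNA : N ⊆ NRset x' ε p := by
    intro i hiN
    have hBpos : 0 < B := by
      rw [hB, barOn]
      exact Finset.sum_pos (fun j hj => hbarposN j hj) ⟨i, hiN⟩
    have hbi : 0 < bar p x i := hbarposN i hiN
    rw [mem_NRset]
    refine ⟨by rw [hbar' i]; exact ne_of_gt hbi, fun k => ?_⟩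
    have hq1 : (1-ε₀) * B ≤ xOn x N k := by
      rw [hB, barOn, xOn, Finset.mul_sum]
      refine Finset.sum_le_sum fun j hj => ?_
      rw [hN, mem_NRset] at hj
      exact (hj.2 k).1
    have hq2 : xOn x N k ≤ (1+ε₀) * B := by
      rw [hB, barOn, xOn, Finset.mul_sum]
      refine Finset.sum_le_sum fun j hj => ?_
      rw [hN, mem_NRset] at hj
      exact (hj.2 k).2
    have hmd : (1-ε₀) * xOn x N k / B = (1-ε₀) * (xOn x N k / B) := by
      rw [mul_div_assoc]
    have hq1' : 1 - ε₀ ≤ xOn x N k / B := (le_div_iff₀ hBpos).2 (by linarith)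
    have hq2' : xOn x N k / B ≤ 1 + ε₀ := (div_le_iff₀ hBpos).2 (by linarith)
    rw [hbar' i, hx'N i hiN k, hmd]
    constructor
    · have h1 : 1 - ε ≤ (1-ε₀) * (xOn x N k / B) + ε₀ := by nlinarith
      nlinarith
    · have h1 : (1-ε₀) * (xOn x N k / B) + ε₀ ≤ 1 + ε := by nlinarith
      nlinarith
  -- NRset x' ε p ⊆ N
  have hAN : NRset x' ε p ⊆ N := by
    intro i hiA
    rw [mem_NRset, hbar' i] at hiA
    obtain ⟨hbi0, hbnd⟩ := hiA
    have hbi : 0 < bar p x i := lt_of_le_of_ne (hbarnn i) (Ne.symm hbi0)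
    by_contra hiN
    have hiN' := hiN
    rw [hN, mem_NRset] at hiN'
    push_neg at hiN'
    obtain ⟨k, hk⟩ := hiN' hbi0
    have hx'k := hx'R i hiN k
    by_cases hlow : (1 - ε₀) * bar p x i ≤ x k i
    · have hhigh := hk hlow
      have h2 := (hbnd k).2
      nlinarith [mul_lt_mul_of_pos_left hhigh (show (0:ℝ) < 1 - ε₀ by linarith)]
    · push_neg at hlow
      have h1 := (hbnd k).1
      nlinarith [mul_lt_mul_of_pos_left hlow (show (0:ℝ) < 1 - ε₀ by linarith)]
  have hAeq : NRset x' ε p = N := Finset.Subset.antisymm hAN hNA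
  intro i hiA k
  rw [hAeq] at hiA ⊢
  have hBpos : 0 < B := by
    rw [hB, barOn]
    exact Finset.sum_pos (fun j hj => hbarposN j hj) ⟨i, hiA⟩
  have hxOn' : xOn x' N k = ((1-ε₀) * xOn x N k / B + ε₀) * B := by
    rw [xOn, hB, barOn, Finset.mul_sum]
    exact Finset.sum_congr rfl fun j hj => hx'N j hj k
  have hbarOn' : barOn p x' N = B := by
    rw [barOn, hB, barOn]
    exact Finset.sum_congr rfl fun j _ => hbar' j
  rw [hx'N i hiA k, hxOn', hbarOn', hbar' i,
    mul_div_assoc ((1-ε₀) * xOn x N k / B + ε₀) B B, div_self (ne_of_gt hBpos), mul_one]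
end
end

section
/- Let ε ∈ (0,1/4], ε₀ := (1−√(1−4ε))/2, p ∈ Δ(K), x a mixed action, and x' := c_{ε₀}(x,p). Then for every i ∈ I, ‖p^{x'}(·|i) − p^x(·|i)‖₁ ≤ 6ε. -/
open Finset

noncomputable section
open Classical

lemma bar_nonneg' {K I : Type*} [Fintype K] (p : K → ℝ) (hp : ∀ k, 0 ≤ p k)
    (x : K → I → ℝ) (hx : ∀ k i, 0 ≤ x k i) (i : I) : 0 ≤ bar p x i :=
  Finset.sum_nonneg fun k _ => mul_nonneg (hp k) (hx k i)

lemma sum_p_xOn {K I : Type*} [Fintype K] (p : K → ℝ) (x : K → I → ℝ) (A : Finset I) :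
    ∑ k, p k * xOn x A k = barOn p x A := by
  unfold xOn barOn bar
  simp only [Finset.mul_sum]
  rw [Finset.sum_comm]

lemma bar_silent {K I : Type*} [Fintype K] [Fintype I] (e0 : ℝ) (p : K → ℝ)
    (hp : pSimplex p) (x : K → I → ℝ) (hx : MixedAction x) (i : I) :
    bar p (silent e0 x p) i = bar p x i := by
  by_cases h : i ∈ NRset x e0 p
  · have hbi : bar p x i ≠ 0 := (Finset.mem_filter.mp h).2.1
    have hbpos : 0 < bar p x i :=
      lt_of_le_of_ne (bar_nonneg' p hp.1 x hx.1 i) (Ne.symm hbi)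
    have hB : 0 < barOn p x (NRset x e0 p) := by
      have h1 : bar p x i ≤ barOn p x (NRset x e0 p) :=
        Finset.single_le_sum (fun j _ => bar_nonneg' p hp.1 x hx.1 j) h
      linarith
    have hBne : barOn p x (NRset x e0 p) ≠ 0 := ne_of_gt hB
    have expand : bar p (silent e0 x p) i = ∑ k, p k * (silent e0 x p k i) := rfl
    rw [expand]
    simp only [silent, h, if_true]
    have key : ∀ k, p k * (((1 - e0) * xOn x (NRset x e0 p) k / barOn p x (NRset x e0 p) + e0) *
          bar p x i) =
        ((1 - e0) / barOn p x (NRset x e0 p) * bar p x i) * (p k * xOn x (NRset x e0 p) k)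
          + (e0 * bar p x i) * p k := by
      intro k; ring
    rw [Finset.sum_congr rfl fun k _ => key k, Finset.sum_add_distrib,
      ← Finset.mul_sum, ← Finset.mul_sum, sum_p_xOn, hp.2]
    field_simp
    ring
  · have expand : bar p (silent e0 x p) i = ∑ k, p k * (silent e0 x p k i) := rfl
    rw [expand]
    simp only [silent, h, if_false]
    have key : ∀ k, p k * ((1 - e0) * x k i + e0 * bar p x i) =
        (1 - e0) * (p k * x k i) + (e0 * bar p x i) * p k := by intro k; ring
    rw [Finset.sum_congr rfl fun k _ => key k, Finset.sum_add_distrib,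
      ← Finset.mul_sum, ← Finset.mul_sum, hp.2]
    show _ = bar p x i
    unfold bar
    ring

/-- posteriors under x' = c_{ε₀}(x,p) are 6ε-close in ℓ¹ to those under x. -/
theorem silent_posterior_close {K I : Type*} [Fintype K] [Fintype I] [Nonempty K] [Nonempty I]
    (ε : ℝ) (hε0 : 0 < ε) (hε1 : ε ≤ 1/4)
    (p : K → ℝ) (hp : pSimplex p)
    (x : K → I → ℝ) (hx : MixedAction x) :
    ∀ i : I,
      ∑ k, |post p (silent ((1 - Real.sqrt (1 - 4*ε))/2) x p) i k - post p x i k| ≤ 6 * ε := by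
  intro i
  set e0 : ℝ := (1 - Real.sqrt (1 - 4*ε))/2 with he0def
  have h4 : (0:ℝ) ≤ 1 - 4*ε := by linarith
  have hs : Real.sqrt (1 - 4*ε) ^ 2 = 1 - 4*ε := Real.sq_sqrt h4
  have hs0 : 0 ≤ Real.sqrt (1 - 4*ε) := Real.sqrt_nonneg _
  have hs1 : Real.sqrt (1 - 4*ε) < 1 := by nlinarith
  have he0pos : 0 < e0 := by rw [he0def]; linarith
  have he0half : e0 ≤ 1/2 := by rw [he0def]; linarith
  have hee : e0 * (1 - e0) = ε := by rw [he0def]; nlinarith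
  have he02 : e0 ≤ 2*ε := by nlinarith
  set x' := silent e0 x p with hx'def
  have hb : bar p x' i = bar p x i := bar_silent e0 p hp x hx i
  by_cases h0 : bar p x i = 0
  · simp only [post, hb, h0, ne_eq, not_true_eq_false, if_false, sub_self, abs_zero]
    simp only [Finset.sum_const_zero]
    positivity
  · have hbpos : 0 < bar p x i :=
      lt_of_le_of_ne (bar_nonneg' p hp.1 x hx.1 i) (Ne.symm h0)
    have hpostx' : ∀ k, post p x' i k = x' k i * p k / bar p x i := by
      intro k; simp only [post, hb, h0, ne_eq, not_false_eq_true, if_true]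
    have hpostx : ∀ k, post p x i k = x k i * p k / bar p x i := by
      intro k; simp only [post, h0, ne_eq, not_false_eq_true, if_true]
    by_cases hiNR : i ∈ NRset x e0 p
    · -- non-revealing case
      have hmem := Finset.mem_filter.mp hiNR
      set B := barOn p x (NRset x e0 p) with hBdef
      have hB : 0 < B := by
        have h1 : bar p x i ≤ B :=
          Finset.single_le_sum (fun j _ => bar_nonneg' p hp.1 x hx.1 j) hiNR
        linarith
      have hxOnlo : ∀ k, (1 - e0) * B ≤ xOn x (NRset x e0 p) k := by
        intro k
        rw [hBdef]
        unfold barOn xOn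
        rw [Finset.mul_sum]
        refine Finset.sum_le_sum fun j hj => ?_
        exact ((Finset.mem_filter.mp hj).2.2 k).1
      have hxOnhi : ∀ k, xOn x (NRset x e0 p) k ≤ (1 + e0) * B := by
        intro k
        rw [hBdef]
        unfold barOn xOn
        rw [Finset.mul_sum]
        refine Finset.sum_le_sum fun j hj => ?_
        exact ((Finset.mem_filter.mp hj).2.2 k).2
      have hpx' : ∀ k, post p x' i k = ((1 - e0) * (xOn x (NRset x e0 p) k / B) + e0) * p k := by
        intro k
        rw [hpostx' k, hx'def]
        show (if i ∈ NRset x e0 p then _ else _) * p k / bar p x i = _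
        simp only [hiNR, if_true]
        rw [← hBdef]
        field_simp
      have hbound : ∀ k, |post p x' i k - post p x i k| ≤ (ε + e0) * p k := by
        intro k
        have hpk : 0 ≤ p k := hp.1 k
        have ht : (1 - e0) ≤ xOn x (NRset x e0 p) k / B ∧
            xOn x (NRset x e0 p) k / B ≤ 1 + e0 := by
          constructor
          · rw [le_div_iff₀ hB]; linarith [hxOnlo k]
          · rw [div_le_iff₀ hB]; linarith [hxOnhi k]
        have h1 : |post p x' i k - p k| ≤ ε * p k := by
          rw [hpx' k, abs_le]
          have hh : 0 ≤ p k * (1 - e0) := by nlinarith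
          constructor
          · nlinarith [mul_nonneg hh (show 0 ≤ xOn x (NRset x e0 p) k / B - (1-e0) by linarith [ht.1])]
          · nlinarith [mul_nonneg hh (show 0 ≤ (1+e0) - xOn x (NRset x e0 p) k / B by linarith [ht.2])]
        have h2 : |post p x i k - p k| ≤ e0 * p k := by
          have hxk := hmem.2.2 k
          have ht2 : (1 - e0) ≤ x k i / bar p x i ∧ x k i / bar p x i ≤ 1 + e0 := by
            constructor
            · rw [le_div_iff₀ hbpos]; linarith [hxk.1]
            · rw [div_le_iff₀ hbpos]; linarith [hxk.2]
          have hq : post p x i k = (x k i / bar p x i) * p k := by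
            rw [hpostx k]; ring
          rw [hq, abs_le]
          constructor
          · nlinarith [mul_nonneg hpk (show 0 ≤ x k i / bar p x i - (1-e0) by linarith [ht2.1])]
          · nlinarith [mul_nonneg hpk (show 0 ≤ (1+e0) - x k i / bar p x i by linarith [ht2.2])]
        calc |post p x' i k - post p x i k|
            ≤ |post p x' i k - p k| + |p k - post p x i k| := abs_sub_le _ _ _
          _ = |post p x' i k - p k| + |post p x i k - p k| := by rw [abs_sub_comm (p k)]
          _ ≤ ε * p k + e0 * p k := add_le_add h1 h2
          _ = (ε + e0) * p k := by ring
      calc ∑ k, |post p x' i k - post p x i k| ≤ ∑ k, (ε + e0) * p k :=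
            Finset.sum_le_sum fun k _ => hbound k
        _ = (ε + e0) * ∑ k, p k := by rw [Finset.mul_sum]
        _ = ε + e0 := by rw [hp.2, mul_one]
        _ ≤ 6 * ε := by linarith
    · -- revealing / zero case
      have hq1 : ∑ k, post p x i k = 1 := by
        have he : ∀ k, post p x i k = p k * x k i / bar p x i := by
          intro k; rw [hpostx k]; ring
        rw [Finset.sum_congr rfl fun k _ => he k, ← Finset.sum_div]
        show bar p x i / bar p x i = 1
        field_simp
      have hqnn : ∀ k, 0 ≤ post p x i k := by
        intro k
        rw [hpostx k]
        exact div_nonneg (mul_nonneg (hx.1 k i) (hp.1 k)) hbpos.le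
      have hdiff : ∀ k, post p x' i k - post p x i k = e0 * (p k - post p x i k) := by
        intro k
        rw [hpostx' k, hpostx k, hx'def]
        show ((if i ∈ NRset x e0 p then _ else _) * p k / bar p x i) - _ = _
        simp only [hiNR, if_false]
        field_simp
        ring
      have hbound : ∀ k, |post p x' i k - post p x i k| ≤ e0 * (p k + post p x i k) := by
        intro k
        have hpk := hp.1 k
        have hqk := hqnn k
        rw [hdiff k, abs_mul, abs_of_pos he0pos]
        exact mul_le_mul_of_nonneg_left
          (abs_sub_le_iff.mpr ⟨by linarith, by linarith⟩) he0pos.le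
      calc ∑ k, |post p x' i k - post p x i k| ≤ ∑ k, e0 * (p k + post p x i k) :=
            Finset.sum_le_sum fun k _ => hbound k
        _ = e0 * ((∑ k, p k) + ∑ k, post p x i k) := by
            rw [← Finset.mul_sum, Finset.sum_add_distrib]
        _ = e0 * 2 := by rw [hp.2, hq1]; norm_num
        _ ≤ 6 * ε := by linarith
end
end
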